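/- arXiv:2406.14901 — 2 statements merged into one kernel-verified Lean document; each statement's English description precedes it below -/
import Mathlib

section
/- MinHash collision probability equals Jaccard similarity: for finite nonempty sets X, Y ⊆ U, if ρ is a uniformly random permutation (or uniformly random injective ranking) of U, and M(X) = min{ρ(x) : x ∈ X}, then Pr(M(X) = M(Y)) = |X ∩ Y| / |X ∪ Y|. -/
open Finset

/-- Key equivalence: the two mins agree iff some element of `X ∩ Y` attains the
min over `X ∪ Y`. -/
private lemma minhash_key {U : Type*} [DecidableEq U] {f : U → ℕ}
    (hf : Function.Injective f) {X Y : Finset U} (hX : X.Nonempty) (hY : Y.Nonempty) :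
    (X.image f).min' (hX.image _) = (Y.image f).min' (hY.image _) ↔
      ∃ u ∈ X ∩ Y, f u = ((X ∪ Y).image f).min'
        ((hX.mono subset_union_left).image _) := by
  constructor
  · intro h
    obtain ⟨x, hx, hfx⟩ := mem_image.mp ((X.image f).min'_mem (hX.image _))
    obtain ⟨y, hy, hfy⟩ := mem_image.mp ((Y.image f).min'_mem (hY.image _))
    have hxy : y = x := hf (by rw [hfx, hfy, h])
    refine ⟨x, mem_inter.mpr ⟨hx, hxy ▸ hy⟩, le_antisymm ?_ ?_⟩
    · apply le_min'
      intro b hb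
      obtain ⟨a, ha, rfl⟩ := mem_image.mp hb
      rcases mem_union.mp ha with ha' | ha'
      · rw [hfx]; exact min'_le _ _ (mem_image_of_mem f ha')
      · rw [hfx, h]; exact min'_le _ _ (mem_image_of_mem f ha')
    · exact min'_le _ _ (mem_image_of_mem f (mem_union_left _ hx))
  · rintro ⟨u, hu, h⟩
    obtain ⟨huX, huY⟩ := mem_inter.mp hu
    have hXu : (X.image f).min' (hX.image _) = f u := by
      refine le_antisymm (min'_le _ _ (mem_image_of_mem f huX)) ?_
      rw [h]
      exact min'_le _ _ (image_subset_image subset_union_left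
        ((X.image f).min'_mem (hX.image _)))
    have hYu : (Y.image f).min' (hY.image _) = f u := by
      refine le_antisymm (min'_le _ _ (mem_image_of_mem f huY)) ?_
      rw [h]
      exact min'_le _ _ (image_subset_image subset_union_right
        ((Y.image f).min'_mem (hY.image _)))
    rw [hXu, hYu]

/-- Fibers of the argmin map have equal cardinality, by the swap bijection. -/
private lemma minhash_fiber_card {U : Type*} [Fintype U] [DecidableEq U] {S : Finset U}
    (hS : S.Nonempty) {u v : U} (hu : u ∈ S) (hv : v ∈ S) :
    ((univ : Finset (U ≃ Fin (Fintype.card U))).filter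
        (fun ρ => ((ρ u : ℕ)) = (S.image fun a => ((ρ a : ℕ))).min' (hS.image _))).card =
    ((univ : Finset (U ≃ Fin (Fintype.card U))).filter
        (fun ρ => ((ρ v : ℕ)) = (S.image fun a => ((ρ a : ℕ))).min' (hS.image _))).card := by
  have hswapS : S.image (Equiv.swap u v) = S := by
    ext a
    simp only [mem_image]
    have key : ∀ b, b ∈ S → Equiv.swap u v b ∈ S := by
      intro b hb
      rcases eq_or_ne b u with rfl | hbu
      · simpa [Equiv.swap_apply_left] using hv
      rcases eq_or_ne b v with rfl | hbv
      · simpa [Equiv.swap_apply_right] using hu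
      · simpa [Equiv.swap_apply_of_ne_of_ne hbu hbv] using hb
    constructor
    · rintro ⟨b, hb, rfl⟩; exact key b hb
    · intro ha
      exact ⟨Equiv.swap u v a, key a ha, Equiv.swap_apply_self _ _ _⟩
  have himg : ∀ ρ : U ≃ Fin (Fintype.card U),
      (S.image fun a => ((((Equiv.swap u v).trans ρ) a : ℕ))) = S.image fun a => ((ρ a : ℕ)) := by
    intro ρ
    conv_lhs => rw [show (fun a => ((((Equiv.swap u v).trans ρ) a : ℕ)))
      = (fun a => ((ρ a : ℕ))) ∘ (Equiv.swap u v) from rfl, ← Finset.image_image, hswapS]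
  refine Finset.card_bij' (fun ρ _ => (Equiv.swap u v).trans ρ)
    (fun ρ _ => (Equiv.swap u v).trans ρ) ?_ ?_ ?_ ?_
  · intro ρ hρ
    simp only [mem_filter, mem_univ, true_and] at hρ ⊢
    simp only [himg ρ]
    simpa [Equiv.swap_apply_right] using hρ
  · intro ρ hρ
    simp only [mem_filter, mem_univ, true_and] at hρ ⊢
    simp only [himg ρ]
    simpa [Equiv.swap_apply_left] using hρ
  · intro ρ _
    ext a
    simp [Equiv.swap_apply_self]
  · intro ρ _
    ext a
    simp [Equiv.swap_apply_self]

/-- MinHash collision probability equals Jaccard similarity: for nonempty finite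
sets `X, Y ⊆ U` and a uniformly random ranking `ρ : U ≃ Fin |U|`, with
`M(A) = min_{a ∈ A} ρ(a)`, we have `Pr(M(X) = M(Y)) = |X ∩ Y| / |X ∪ Y|`. -/
theorem minhash_collision_eq_jaccard {U : Type*} [Fintype U] [DecidableEq U]
    (X Y : Finset U) (hX : X.Nonempty) (hY : Y.Nonempty) :
    (((Finset.univ : Finset (U ≃ Fin (Fintype.card U))).filter
        (fun ρ => (X.image fun a => ((ρ a : ℕ))).min' (hX.image _)
                 = (Y.image fun a => ((ρ a : ℕ))).min' (hY.image _))).card : ℚ)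
      / (Fintype.card (U ≃ Fin (Fintype.card U)) : ℚ)
      = ((X ∩ Y).card : ℚ) / ((X ∪ Y).card : ℚ) := by
  classical
  have hS : (X ∪ Y).Nonempty := hX.mono subset_union_left
  obtain ⟨u0, hu0⟩ := id hS
  set F : U → Finset (U ≃ Fin (Fintype.card U)) := fun u =>
    univ.filter (fun ρ => ((ρ u : ℕ))
      = ((X ∪ Y).image fun a => ((ρ a : ℕ))).min' (hS.image _)) with hF
  have hinj : ∀ ρ : U ≃ Fin (Fintype.card U),
      Function.Injective (fun a => ((ρ a : ℕ))) := fun ρ a b h =>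
    ρ.injective (Fin.ext h)
  have hdisj : ∀ u ∈ (X ∪ Y), ∀ v ∈ (X ∪ Y), u ≠ v → Disjoint (F u) (F v) := by
    intro u _ v _ huv
    refine Finset.disjoint_left.mpr fun ρ hρu hρv => ?_
    simp only [hF, mem_filter] at hρu hρv
    exact huv (hinj ρ (hρu.2.trans hρv.2.symm))
  have hunion : (univ : Finset (U ≃ Fin (Fintype.card U))) = (X ∪ Y).biUnion F := by
    ext ρ
    simp only [mem_biUnion, mem_univ, true_iff, hF, mem_filter, mem_univ, true_and]
    obtain ⟨a, ha, hfa⟩ := mem_image.mp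
      (((X ∪ Y).image fun a => ((ρ a : ℕ))).min'_mem (hS.image _))
    exact ⟨a, ha, hfa⟩
  have hfilter : ((Finset.univ : Finset (U ≃ Fin (Fintype.card U))).filter
        (fun ρ => (X.image fun a => ((ρ a : ℕ))).min' (hX.image _)
                 = (Y.image fun a => ((ρ a : ℕ))).min' (hY.image _)))
      = (X ∩ Y).biUnion F := by
    ext ρ
    simp only [mem_filter, mem_univ, true_and, mem_biUnion, hF]
    rw [minhash_key (hinj ρ) hX hY]
  have hc : ∀ u ∈ X ∪ Y, (F u).card = (F u0).card := fun u hu =>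
    minhash_fiber_card hS hu hu0
  have hnum : ((Finset.univ : Finset (U ≃ Fin (Fintype.card U))).filter
        (fun ρ => (X.image fun a => ((ρ a : ℕ))).min' (hX.image _)
                 = (Y.image fun a => ((ρ a : ℕ))).min' (hY.image _))).card
      = (X ∩ Y).card * (F u0).card := by
    rw [hfilter, card_biUnion (fun u hu v hv huv =>
      hdisj u (inter_subset_union hu) v (inter_subset_union hv) huv)]
    rw [Finset.sum_congr rfl (fun u hu => hc u (inter_subset_union hu)), sum_const, smul_eq_mul]
  have hden : Fintype.card (U ≃ Fin (Fintype.card U)) = (X ∪ Y).card * (F u0).card := by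
    rw [← Finset.card_univ, hunion, card_biUnion hdisj,
      Finset.sum_congr rfl hc, sum_const, smul_eq_mul]
  have hpos : 0 < Fintype.card (U ≃ Fin (Fintype.card U)) :=
    @Fintype.card_pos _ _ ⟨Fintype.equivFin U⟩
  have hc0 : ((F u0).card : ℚ) ≠ 0 := by
    have : (F u0).card ≠ 0 := by
      intro h
      rw [hden, h, Nat.mul_zero] at hpos
      exact lt_irrefl 0 hpos
    exact_mod_cast this
  rw [hnum, hden]
  push_cast
  rw [mul_div_mul_right _ _ hc0]
end

section
/- Jaccard similarity of consecutive kmers: let x and y be consecutive kmers (windows of length k at positions i and i+1) of a string, with sub-kmer index sets interpreted as sequences; if all k − t + 1 sub-kmers of each kmer are distinct, then the sub-kmer sets X = S(x,t) and Y = S(y,t) satisfy |X ∩ Y| ≥ k − t and |X ∪ Y| ≤ k − t + 2, hence J(X, Y) ≥ (k − t)/(k − t + 2). -/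
/-- Jaccard similarity of consecutive kmers: if `x = G[i : i+k]` and
`y = G[i+1 : i+1+k]` are consecutive windows and all `k − t + 1` length-`t`
sub-kmers of each are pairwise distinct, then their sub-kmer sets `X, Y`
satisfy `|X ∩ Y| ≥ k − t`, `|X ∪ Y| ≤ k − t + 2`, and hence
`J(X, Y) ≥ (k − t)/(k − t + 2)`. -/
theorem consecutive_kmer_jaccard {α : Type*} [DecidableEq α]
    (G : List α) (k t i : ℕ) (ht : 0 < t) (htk : t ≤ k)
    (hiG : i + 1 + k ≤ G.length)
    (x y : List α) (hx : x = (G.drop i).take k) (hy : y = (G.drop (i + 1)).take k)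
    (X Y : Finset (List α))
    (hX : X = ((List.range (k - t + 1)).map fun j => (x.drop j).take t).toFinset)
    (hY : Y = ((List.range (k - t + 1)).map fun j => (y.drop j).take t).toFinset)
    -- all sub-kmers of each kmer are pairwise distinct
    (hxnodup : ((List.range (k - t + 1)).map fun j => (x.drop j).take t).Nodup)
    (hynodup : ((List.range (k - t + 1)).map fun j => (y.drop j).take t).Nodup) :
    k - t ≤ (X ∩ Y).card ∧
    (X ∪ Y).card ≤ k - t + 2 ∧
    (((k - t : ℕ) : ℚ)) / (((k - t : ℕ) : ℚ) + 2)
      ≤ ((X ∩ Y).card : ℚ) / ((X ∪ Y).card : ℚ) := by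
  set a := k - t with ha
  set f : ℕ → List α := fun j => (x.drop j).take t with hf
  set g : ℕ → List α := fun j => (y.drop j).take t with hg
  have key : ∀ j < a, f (j + 1) = g j := by
    intro j hj
    simp only [hf, hg, hx, hy]
    rw [List.drop_take, List.drop_take, List.take_take, List.take_take,
      List.drop_drop, List.drop_drop]
    congr 1
    · omega
    · congr 1
      omega
  set C := ((List.range a).map (fun j => f (j + 1))).toFinset with hC
  have hsplit : (List.range (a + 1)).map f = f 0 :: (List.range a).map (fun j => f (j + 1)) := by
    rw [List.range_succ_eq_map, List.map_cons, List.map_map]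
    rfl
  have hCnodup : ((List.range a).map (fun j => f (j + 1))).Nodup := by
    have h := hxnodup
    rw [hsplit] at h
    exact h.of_cons
  have hCcard : C.card = a := by
    rw [hC, List.toFinset_card_of_nodup hCnodup, List.length_map, List.length_range]
  have hCX : C ⊆ X := by
    rw [hC, hX]
    intro s hs
    simp only [List.mem_toFinset, List.mem_map, List.mem_range] at hs ⊢
    obtain ⟨j, hj, rfl⟩ := hs
    exact ⟨j + 1, by omega, rfl⟩
  have hCY : C ⊆ Y := by
    rw [hC, hY]
    intro s hs
    simp only [List.mem_toFinset, List.mem_map, List.mem_range] at hs ⊢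
    obtain ⟨j, hj, rfl⟩ := hs
    exact ⟨j, by omega, (key j hj).symm⟩
  have h1 : a ≤ (X ∩ Y).card := by
    calc a = C.card := hCcard.symm
    _ ≤ (X ∩ Y).card := Finset.card_le_card (Finset.subset_inter hCX hCY)
  have hsub : X ∪ Y ⊆ insert (f 0) (insert (g a) C) := by
    intro s hs
    rw [Finset.mem_union] at hs
    simp only [Finset.mem_insert, hC, List.mem_toFinset, List.mem_map, List.mem_range]
    rcases hs with hs | hs
    · rw [hX] at hs
      simp only [List.mem_toFinset, List.mem_map, List.mem_range] at hs
      obtain ⟨j, hj, rfl⟩ := hs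
      rcases Nat.eq_zero_or_pos j with h0 | h0
      · exact Or.inl (by rw [h0])
      · exact Or.inr (Or.inr ⟨j - 1, by omega, by congr 1; omega⟩)
    · rw [hY] at hs
      simp only [List.mem_toFinset, List.mem_map, List.mem_range] at hs
      obtain ⟨j, hj, rfl⟩ := hs
      rcases Nat.lt_or_ge j a with h0 | h0
      · exact Or.inr (Or.inr ⟨j, h0, key j h0⟩)
      · have : j = a := by omega
        exact Or.inr (Or.inl (by rw [this]))
  have h2 : (X ∪ Y).card ≤ a + 2 := by
    calc (X ∪ Y).card ≤ (insert (f 0) (insert (g a) C)).card :=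
          Finset.card_le_card hsub
    _ ≤ (insert (g a) C).card + 1 := Finset.card_insert_le _ _
    _ ≤ C.card + 1 + 1 := by exact Nat.add_le_add_right (Finset.card_insert_le _ _) 1
    _ = a + 2 := by rw [hCcard]
  refine ⟨h1, h2, ?_⟩
  have hupos : 0 < (X ∪ Y).card := by
    refine Finset.card_pos.mpr ⟨f 0, Finset.mem_union_left _ ?_⟩
    rw [hX]
    simp only [List.mem_toFinset, List.mem_map, List.mem_range]
    exact ⟨0, by omega, rfl⟩
  have hc : (a : ℚ) ≤ ((X ∩ Y).card : ℚ) := by exact_mod_cast h1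
  have hu : ((X ∪ Y).card : ℚ) ≤ (a : ℚ) + 2 := by exact_mod_cast h2
  have hup : (0 : ℚ) < ((X ∪ Y).card : ℚ) := by exact_mod_cast hupos
  have hanneg : (0 : ℚ) ≤ (a : ℚ) := Nat.cast_nonneg a
  rw [div_le_div_iff₀ (by positivity) hup]
  nlinarith [hc, hu, hup, hanneg]
end
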